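/- Let V be a real inner product space with compatible complex structure J and let W be the space of trilinear forms α with α(x,y,z) = −α(x,z,y) = −α(x,Jy,Jz). If α ∈ W satisfies the cyclic condition α(x,y,z) + α(z,x,y) + α(y,z,x) = 0 for all x,y,z, then α(x,y,z) = −α(Jx,Jy,z) for all x,y,z ∈ V. -/

import Mathlib

/-- Membership in the Gray–Hervella space `W`. -/
def GrayHervella.memW {V : Type*} [NormedAddCommGroup V] [InnerProductSpace ℝ V]
    (J : V →ₗ[ℝ] V) (α : V →ₗ[ℝ] V →ₗ[ℝ] V →ₗ[ℝ] ℝ) : Prop :=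
  ∀ x y z : V, α x y z = - α x z y ∧ α x y z = - α x (J y) (J z)

/-- If `α ∈ W` satisfies the cyclic condition
`α(x,y,z) + α(z,x,y) + α(y,z,x) = 0`, then `α(x,y,z) = −α(Jx,Jy,z)`. -/
theorem W2_implies_Jskew
    {V : Type*} [NormedAddCommGroup V] [InnerProductSpace ℝ V]
    (J : V →ₗ[ℝ] V) (hJ2 : ∀ x : V, J (J x) = -x)
    (hJinner : ∀ x y : V, (inner ℝ (J x) (J y) : ℝ) = inner ℝ x y)
    (α : V →ₗ[ℝ] V →ₗ[ℝ] V →ₗ[ℝ] ℝ) (hα : GrayHervella.memW J α)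
    (hcyc : ∀ x y z : V, α x y z + α z x y + α y z x = 0) :
    ∀ x y z : V, α x y z = - α (J x) (J y) z := by
  have hswap : ∀ x y z : V, α x (J y) z = α x y (J z) := by
    intro x y z
    have h1 := (hα x y (J z)).2
    rw [hJ2, map_neg] at h1
    linarith
  have hB : ∀ x y z : V,
      α x y z + α (J x) (J y) z = -(α y z x + α (J y) (J z) x) := by
    intro x y z
    have h1 := hcyc x y z
    have h2 := hcyc (J x) (J y) z
    have h3 : α z (J x) (J y) = - α z x y := by
      have := (hα z x y).2; linarith
    have h4 : α (J y) z (J x) = α (J y) (J z) x := (hswap (J y) z x).symm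
    linarith
  intro x y z
  have b1 := hB x y z
  have b2 := hB y z x
  have b3 := hB z x y
  linarith
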